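/- Let n, k be natural numbers with k ≤ n and let U be a real n×k matrix. Then there exists a real n×k matrix F with Fᵀ F = I_k such that Tr(Fᵀ U) = Tr((Uᵀ U)^{1/2}), where (Uᵀ U)^{1/2} denotes the positive semidefinite square root of Uᵀ U. -/

import Mathlib

open Matrix

/-- Orthogonal Procrustes achievability (Theorem 2, attainment part):
if `k ≤ n` and `S` is the positive semidefinite square root of `Uᵀ U`,
there exists `F` with orthonormal columns such that `Tr(Fᵀ U) = Tr S`. -/
theorem exists_orth_trace_eq_trace_sqrt
    (n k : ℕ) (hkn : k ≤ n) (U : Matrix (Fin n) (Fin k) ℝ)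
    (S : Matrix (Fin k) (Fin k) ℝ) (hS : S.PosSemidef) (hSsq : S * S = Uᵀ * U) :
    ∃ F : Matrix (Fin n) (Fin k) ℝ, Fᵀ * F = 1 ∧
      Matrix.trace (Fᵀ * U) = Matrix.trace S := by
  classical
  have hH : S.IsHermitian := hS.1
  set d : Fin k → ℝ := hH.eigenvalues with hd
  have hd0 : ∀ j, 0 ≤ d j := fun j => hS.eigenvalues_nonneg j
  set Q : Matrix (Fin k) (Fin k) ℝ := (hH.eigenvectorUnitary : Matrix (Fin k) (Fin k) ℝ) with hQdef
  have hQQ : Qᵀ * Q = 1 := by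
    have := (Matrix.mem_unitaryGroup_iff'.mp hH.eigenvectorUnitary.2)
    simpa [star_eq_conjTranspose, conjTranspose_eq_transpose_of_trivial] using this
  have hQQ' : Q * Qᵀ = 1 := by
    have := (Matrix.mem_unitaryGroup_iff.mp hH.eigenvectorUnitary.2)
    simpa [star_eq_conjTranspose, conjTranspose_eq_transpose_of_trivial] using this
  have hmid : ∀ X : Matrix (Fin k) (Fin k) ℝ, Qᵀ * (Q * X) = X := fun X => by
    rw [← Matrix.mul_assoc, hQQ, Matrix.one_mul]
  have hspec : S = Q * diagonal d * Qᵀ := by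
    have := hH.spectral_theorem
    simpa [star_eq_conjTranspose, conjTranspose_eq_transpose_of_trivial,
      Function.comp] using this
  set W : Matrix (Fin n) (Fin k) ℝ := U * Q with hWdef
  have hW : Wᵀ * W = diagonal (fun j => d j * d j) := by
    have h1 : Wᵀ * W = Qᵀ * (S * S) * Q := by
      rw [hWdef, transpose_mul, hSsq]; simp only [Matrix.mul_assoc]
    rw [h1, hspec]
    simp only [Matrix.mul_assoc, hmid, hQQ, Matrix.mul_one]
    rw [diagonal_mul_diagonal]
  -- entrywise form
  have hWe : ∀ j j' : Fin k, (∑ a, W a j * W a j') = if j = j' then d j * d j else 0 := by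
    intro j j'
    have := congrFun (congrFun hW j) j'
    simpa [Matrix.mul_apply, Matrix.diagonal, Matrix.transpose_apply, mul_comm] using this
  -- the candidate normalized columns, as vectors in Euclidean space
  set v : Fin n → EuclideanSpace ℝ (Fin n) :=
    fun i => if h : (i : ℕ) < k then WithLp.toLp 2 (fun a => (d ⟨i, h⟩)⁻¹ * W a ⟨i, h⟩) else 0 with hv
  set s : Set (Fin n) := {i | ∃ h : (i : ℕ) < k, d ⟨i, h⟩ ≠ 0} with hs
  have hon : Orthonormal ℝ (s.restrict v) := by
    rw [orthonormal_iff_ite]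
    rintro ⟨i, hi, hdi⟩ ⟨i', hi', hdi'⟩
    have hvi : v i = fun a => (d ⟨i, hi⟩)⁻¹ * W a ⟨i, hi⟩ := by simp [hv, hi]
    have hvi' : v i' = fun a => (d ⟨i', hi'⟩)⁻¹ * W a ⟨i', hi'⟩ := by simp [hv, hi']
    have hinner : (inner ℝ (v i) (v i') : ℝ) =
        (d ⟨i, hi⟩)⁻¹ * (d ⟨i', hi'⟩)⁻¹ * ∑ a, W a ⟨i, hi⟩ * W a ⟨i', hi'⟩ := by
      simp only [PiLp.inner_apply, RCLike.inner_apply, conj_trivial, hvi, hvi',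
        Finset.mul_sum]
      apply Finset.sum_congr rfl; intro a _; ring
    change inner ℝ (v i) (v i') = _
    rw [hinner, hWe]
    by_cases hii : i = i'
    · subst hii
      simp only [if_pos rfl, Subtype.mk.injEq, if_pos rfl]
      field_simp
      simp
    · have h1 : (⟨i, hi⟩ : Fin k) ≠ ⟨i', hi'⟩ := by
        intro h; apply hii
        have h2 : ((⟨i, hi⟩ : Fin k) : ℕ) = ((⟨i', hi'⟩ : Fin k) : ℕ) := congrArg Fin.val h
        exact Fin.ext h2
      have h2 : (⟨i, hi, hdi⟩ : s) ≠ ⟨i', hi', hdi'⟩ := by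
        intro h; apply hii; exact congrArg Subtype.val h
      simp [h1, h2]
  obtain ⟨b, hb⟩ := hon.exists_orthonormalBasis_extension_of_card_eq
    (by simp [finrank_euclideanSpace])
  set E : Matrix (Fin n) (Fin k) ℝ := Matrix.of fun a j => b (Fin.castLE hkn j) a with hE
  have hEE : Eᵀ * E = 1 := by
    ext j j'
    have := (orthonormal_iff_ite.mp b.orthonormal) (Fin.castLE hkn j) (Fin.castLE hkn j')
    have hinj : (Fin.castLE hkn j = Fin.castLE hkn j') ↔ j = j' := by
      constructor
      · intro h
        have h2 : ((Fin.castLE hkn j : Fin n) : ℕ) = ((Fin.castLE hkn j' : Fin n) : ℕ) :=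
          congrArg Fin.val h
        exact Fin.ext h2
      · intro h; rw [h]
    rw [Matrix.mul_apply]
    simp only [PiLp.inner_apply, RCLike.inner_apply, conj_trivial] at this
    simp only [Matrix.transpose_apply, hE, Matrix.of_apply, Matrix.one_apply]
    rw [← Finset.sum_congr rfl (fun x _ => mul_comm ((b (Fin.castLE hkn j')).ofLp x)
      ((b (Fin.castLE hkn j)).ofLp x)), this]
    simp [hinj]
  -- column sums
  have hcol : ∀ j : Fin k, (∑ a, E a j * W a j) = d j := by
    intro j
    by_cases hdj : d j = 0
    · have hz : ∀ a, W a j = 0 := by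
        have h0 : (∑ a, W a j * W a j) = 0 := by rw [hWe j j]; simp [hdj]
        intro a
        have := (Finset.sum_eq_zero_iff_of_nonneg
          (fun a _ => mul_self_nonneg (W a j))).mp h0 a (Finset.mem_univ a)
        exact mul_self_eq_zero.mp this
      simp [hz, hdj]
    · have hmem : Fin.castLE hkn j ∈ s := by
        exact ⟨by simpa using j.isLt, hdj⟩
      have hbj : b (Fin.castLE hkn j) = v (Fin.castLE hkn j) := hb _ hmem
      have hfin : (⟨((Fin.castLE hkn j : Fin n) : ℕ), by simpa using j.isLt⟩ : Fin k) = j :=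
        Fin.ext rfl
      have hEa : ∀ a, E a j = (d j)⁻¹ * W a j := by
        intro a
        rw [hE]
        show b (Fin.castLE hkn j) a = (d j)⁻¹ * W a j
        rw [hbj, hv]
        simp only [dif_pos (show ((Fin.castLE hkn j : Fin n) : ℕ) < k by simpa using j.isLt)]
        rfl

      calc (∑ a, E a j * W a j) = (d j)⁻¹ * ∑ a, W a j * W a j := by
            rw [Finset.mul_sum]; exact Finset.sum_congr rfl fun a _ => by rw [hEa a]; ring
        _ = (d j)⁻¹ * (d j * d j) := by rw [hWe]; simp
        _ = d j := by field_simp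
  refine ⟨E * Qᵀ, ?_, ?_⟩
  · rw [transpose_mul, transpose_transpose, Matrix.mul_assoc, ← Matrix.mul_assoc Eᵀ, hEE,
      Matrix.one_mul, hQQ']
  · have h1 : Matrix.trace ((E * Qᵀ)ᵀ * U) = Matrix.trace (Eᵀ * W) := by
      rw [transpose_mul, transpose_transpose, Matrix.mul_assoc, hWdef,
        Matrix.trace_mul_comm Q, Matrix.mul_assoc]
    have h2 : Matrix.trace (Eᵀ * W) = ∑ j, d j := by
      rw [Matrix.trace]
      simp only [Matrix.diag_apply, Matrix.mul_apply, Matrix.transpose_apply]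
      exact Finset.sum_congr rfl fun j _ => hcol j
    have h3 : Matrix.trace S = ∑ j, d j := by
      rw [hspec, Matrix.trace_mul_comm, ← Matrix.mul_assoc, hQQ, Matrix.one_mul,
        Matrix.trace_diagonal]
    rw [h1, h2, h3]
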